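/- (Entropy replacement at scale N.) Fix α ∈ (0,1) and set M := ⌊αN⌋. Then (1/N)·| log Z̄^{≤M} − log Z̃^{≤M} | → 0 as N → ∞. -/

import Mathlib

open Filter Finset
open scoped Nat

namespace EntropyAux

variable {X : Type*} [DecidableEq X] [Fintype X]

/-- the multiset of values of a tuple -/
def ofnM {L : ℕ} (f : Fin L → X) : Multiset X := (List.ofFn f : List X)

lemma ofnM_succ {L : ℕ} (f : Fin (L + 1) → X) :
    ofnM f = f 0 ::ₘ ofnM (f ∘ Fin.succ) := by
  simp only [ofnM, List.ofFn_succ]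
  rfl

lemma card_ofnM {L : ℕ} (f : Fin L → X) : Multiset.card (ofnM f) = L := by
  simp [ofnM]

lemma mem_ofnM {L : ℕ} {f : Fin L → X} {x : X} : x ∈ ofnM f ↔ ∃ k, f k = x := by
  simp [ofnM, List.mem_ofFn]

/-- fiber count times product of factorials of multiplicities equals `L!`. -/
lemma count_mul_prod_factorial :
    ∀ (L : ℕ) (m : Multiset X), Multiset.card m = L →
      (Finset.univ.filter fun f : Fin L → X => ofnM f = m).card *
        ∏ x ∈ m.toFinset, (m.count x)! = L !
  | 0, m, hm => by
    have hm0 : m = 0 := Multiset.card_eq_zero.mp hm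
    subst hm0
    have h1 : (Finset.univ.filter fun f : Fin 0 → X => ofnM f = 0) = Finset.univ := by
      refine Finset.filter_true_of_mem fun f _ => ?_
      simp [ofnM]
    rw [h1]
    simp
  | (L + 1), m, hm => by
    classical
    have key : (Finset.univ.filter fun f : Fin (L + 1) → X => ofnM f = m).card
        = ∑ x ∈ m.toFinset,
            (Finset.univ.filter fun g : Fin L → X => ofnM g = m.erase x).card := by
      rw [Finset.card_eq_sum_card_fiberwise (f := fun f => f 0) (t := m.toFinset)
        (fun f hf => by
          simp only [Finset.mem_coe, Finset.mem_filter] at hf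
          rw [Finset.mem_coe, Multiset.mem_toFinset, ← hf.2]
          exact mem_ofnM.mpr ⟨0, rfl⟩)]
      refine Finset.sum_congr rfl fun x hx => ?_
      refine Finset.card_bij (fun f _ => f ∘ Fin.succ) ?_ ?_ ?_
      · intro f hf
        simp only [Finset.mem_filter, Finset.mem_univ, true_and] at hf ⊢
        rw [← hf.2, ← hf.1, ofnM_succ f, Multiset.erase_cons_head]
      · intro f hf g hg hfg
        simp only [Finset.mem_filter, Finset.mem_univ, true_and] at hf hg
        funext k
        refine Fin.cases ?_ ?_ k
        · rw [hf.2, hg.2]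
        · intro i
          exact congrFun hfg i
      · intro g hg
        simp only [Finset.mem_filter, Finset.mem_univ, true_and] at hg
        refine ⟨Fin.cons x g, ?_, ?_⟩
        · simp only [Finset.mem_filter, Finset.mem_univ, true_and]
          constructor
          · have : (Fin.cons x g : Fin (L+1) → X) ∘ Fin.succ = g := by
              funext i; simp
            rw [ofnM_succ, this, hg, Fin.cons_zero]
            exact Multiset.cons_erase (Multiset.mem_toFinset.mp hx)
          · simp
        · funext i; simp
    have hxmem : ∀ x ∈ m.toFinset,
        ∏ y ∈ m.toFinset, (m.count y)! =
          m.count x * ∏ y ∈ (m.erase x).toFinset, ((m.erase x).count y)! := by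
      intro x hx
      have hcx : 1 ≤ m.count x := Multiset.one_le_count_iff_mem.mpr (Multiset.mem_toFinset.mp hx)
      have h1 : ∏ y ∈ m.toFinset, (m.count y)! =
          (m.count x)! * ∏ y ∈ m.toFinset.erase x, (m.count y)! :=
        (Finset.mul_prod_erase _ _ hx).symm
      have h2 : ∀ y ∈ m.toFinset.erase x, (m.count y)! = ((m.erase x).count y)! := by
        intro y hy
        rw [Multiset.count_erase_of_ne (Finset.ne_of_mem_erase hy)]
      have h3 : (m.count x)! = m.count x * ((m.erase x).count x)! := by
        rw [Multiset.count_erase_self]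
        exact (Nat.mul_factorial_pred (Nat.one_le_iff_ne_zero.mp hcx)).symm
      have h4 : ((m.erase x).count x)! * ∏ y ∈ m.toFinset.erase x, ((m.erase x).count y)! =
          ∏ y ∈ m.toFinset, ((m.erase x).count y)! :=
        Finset.mul_prod_erase m.toFinset (fun y => ((m.erase x).count y)!) hx
      have h5 : ∏ y ∈ m.toFinset, ((m.erase x).count y)! =
          ∏ y ∈ (m.erase x).toFinset, ((m.erase x).count y)! := by
        refine (Finset.prod_subset (Multiset.toFinset_subset.mpr (Multiset.erase_subset _ _)) ?_).symm
        intro y hy hyn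
        rw [Multiset.count_eq_zero_of_notMem (fun hc => hyn (Multiset.mem_toFinset.mpr hc))]
        rfl
      rw [h1, Finset.prod_congr rfl h2, h3, mul_assoc, h4, h5]
    rw [key, Finset.sum_mul]
    have : ∀ x ∈ m.toFinset,
        (Finset.univ.filter fun g : Fin L → X => ofnM g = m.erase x).card *
          ∏ y ∈ m.toFinset, (m.count y)! = m.count x * L ! := by
      intro x hx
      rw [hxmem x hx, mul_comm (m.count x), ← mul_assoc,
        count_mul_prod_factorial L (m.erase x) (by
          rw [Multiset.card_erase_of_mem (Multiset.mem_toFinset.mp hx), hm]; rfl)]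
      ring
    rw [Finset.sum_congr rfl this, ← Finset.sum_mul, Multiset.toFinset_sum_count_eq, hm,
      Nat.factorial_succ]






lemma exp_lower : ∀ L : ℕ, ((L : ℝ) / Real.exp 1) ^ L ≤ (L ! : ℝ)
  | 0 => by simp
  | (L + 1) => by
    have ih := exp_lower L
    have he : (0:ℝ) < Real.exp 1 := Real.exp_pos 1
    have key : ((L : ℝ) + 1) ^ L ≤ Real.exp 1 * (L:ℝ) ^ L := by
      rcases Nat.eq_zero_or_pos L with h | h
      · subst h; simpa using Real.one_le_exp (by norm_num)
      · have hL : (0:ℝ) < L := by exact_mod_cast h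
        have h1 : (L : ℝ) + 1 ≤ (L:ℝ) * Real.exp (1 / L) := by
          have := Real.add_one_le_exp (1 / (L:ℝ))
          calc (L:ℝ) + 1 = (L:ℝ) * (1/(L:ℝ) + 1) := by field_simp; ring
          _ ≤ (L:ℝ) * Real.exp (1/(L:ℝ)) := by
              exact mul_le_mul_of_nonneg_left this (le_of_lt hL)
        calc ((L:ℝ) + 1) ^ L ≤ ((L:ℝ) * Real.exp (1/(L:ℝ))) ^ L := by
              exact pow_le_pow_left₀ (by positivity) h1 L
        _ = (L:ℝ)^L * Real.exp (1/(L:ℝ)) ^ L := mul_pow _ _ _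
        _ = Real.exp 1 * (L:ℝ)^L := by
              rw [← Real.exp_nat_mul]
              rw [mul_one_div, div_self (ne_of_gt hL)]
              ring
    have hfact : ((L+1)! : ℝ) = ((L:ℝ) + 1) * (L ! : ℝ) := by
      rw [Nat.factorial_succ]; push_cast; ring
    rw [div_pow]
    calc (((L+1) : ℕ) : ℝ) ^ (L+1) / Real.exp 1 ^ (L+1)
        = ((L:ℝ)+1) * (((L:ℝ)+1)^L / Real.exp 1 ^ (L+1)) := by push_cast; ring
      _ ≤ ((L:ℝ)+1) * ((Real.exp 1 * (L:ℝ)^L) / Real.exp 1 ^ (L+1)) := by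
          gcongr
      _ = ((L:ℝ)+1) * ((L:ℝ)^L / Real.exp 1 ^ L) := by
          rw [pow_succ]; field_simp
      _ = ((L:ℝ)+1) * ((L:ℝ) / Real.exp 1) ^ L := by rw [div_pow]
      _ ≤ ((L:ℝ)+1) * (L ! : ℝ) := by
          apply mul_le_mul_of_nonneg_left ih (by positivity)
      _ = ((L+1)! : ℝ) := hfact.symm


lemma fact_upper : ∀ n : ℕ, 1 ≤ n → ((n)! : ℝ) ≤ (n:ℝ) ^ n * n * Real.exp (1 - n) := by
  refine Nat.le_induction (by norm_num) ?_
  intro n hn ih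
  · have ha : (0:ℝ) < n := by exact_mod_cast hn
    have key : (n:ℝ) ^ (n+1) * Real.exp 1 ≤ ((n:ℝ) + 1) ^ (n+1) := by
      have h1 : (n:ℝ) ≤ ((n:ℝ) + 1) * Real.exp (-(1 / ((n:ℝ) + 1))) := by
        have h2 := Real.add_one_le_exp (-(1 / ((n:ℝ) + 1)))
        calc (n:ℝ) = ((n:ℝ) + 1) * (-(1 / ((n:ℝ)+1)) + 1) := by field_simp; ring
          _ ≤ ((n:ℝ) + 1) * Real.exp (-(1 / ((n:ℝ)+1))) :=
              mul_le_mul_of_nonneg_left h2 (by positivity)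
      have h3 : (n:ℝ) ^ (n+1) ≤ ((n:ℝ)+1) ^ (n+1) * Real.exp (-(1 / ((n:ℝ)+1))) ^ (n+1) := by
        calc (n:ℝ) ^ (n+1) ≤ (((n:ℝ) + 1) * Real.exp (-(1 / ((n:ℝ) + 1)))) ^ (n+1) :=
              pow_le_pow_left₀ (by positivity) h1 (n+1)
          _ = _ := mul_pow _ _ _
      have h4 : Real.exp (-(1 / ((n:ℝ)+1))) ^ (n+1) = Real.exp (-1) := by
        rw [← Real.exp_nat_mul]
        congr 1
        push_cast
        field_simp
      rw [h4] at h3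
      calc (n:ℝ) ^ (n+1) * Real.exp 1 ≤ (((n:ℝ)+1) ^ (n+1) * Real.exp (-1)) * Real.exp 1 :=
            mul_le_mul_of_nonneg_right h3 (le_of_lt (Real.exp_pos 1))
        _ = ((n:ℝ)+1) ^ (n+1) := by rw [mul_assoc, ← Real.exp_add]; norm_num
    have hfact : (((n+1))! : ℝ) = ((n:ℝ) + 1) * ((n)! : ℝ) := by
      rw [Nat.factorial_succ]; push_cast; ring
    have hexp : Real.exp (1 - (n:ℝ)) = Real.exp 1 * Real.exp (-(n:ℝ)) := by
      rw [← Real.exp_add]; ring_nf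
    calc (((n+1))! : ℝ) = ((n:ℝ) + 1) * ((n)! : ℝ) := hfact
      _ ≤ ((n:ℝ) + 1) * ((n:ℝ) ^ n * n * Real.exp (1 - n)) :=
          mul_le_mul_of_nonneg_left ih (by positivity)
      _ = ((n:ℝ) + 1) * (((n:ℝ) ^ (n+1) * Real.exp 1) * Real.exp (-(n:ℝ))) := by
          rw [hexp]; ring
      _ ≤ ((n:ℝ) + 1) * (((n:ℝ) + 1) ^ (n+1) * Real.exp (-(n:ℝ))) := by
          have := mul_le_mul_of_nonneg_right key (le_of_lt (Real.exp_pos (-(n:ℝ))))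
          exact mul_le_mul_of_nonneg_left this (by positivity)
      _ = ((n:ℝ) + 1) ^ (n+1) * ((n:ℝ)+1) * Real.exp (1 - ((n:ℝ)+1)) := by
          rw [show (1 : ℝ) - ((n:ℝ)+1) = -(n:ℝ) by ring]
          ring
      _ = (((n:ℕ)+1 : ℕ):ℝ) ^ (n+1) * (((n:ℕ)+1 : ℕ):ℝ) * Real.exp (1 - (((n:ℕ)+1:ℕ):ℝ)) := by
          push_cast; ring_nf




lemma card_fiber_eq_multinomial {L : ℕ} {m : Multiset X} (hm : Multiset.card m = L) :
    (Finset.univ.filter fun f : Fin L → X => ofnM f = m).card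
      = Nat.multinomial m.toFinset m.count := by
  have h1 := count_mul_prod_factorial L m hm
  have h2 := Nat.multinomial_spec m.toFinset m.count
  rw [Multiset.toFinset_sum_count_eq, hm] at h2
  have hpos : 0 < ∏ x ∈ m.toFinset, (m.count x)! :=
    Finset.prod_pos fun x _ => Nat.factorial_pos _
  apply Nat.eq_of_mul_eq_mul_right hpos
  rw [h1, ← h2]; ring

lemma prod_count_factorial_pos (m : Multiset X) :
    (0:ℝ) < ∏ x ∈ m.toFinset, ((m.count x)! : ℝ) :=
  Finset.prod_pos fun x _ => by exact_mod_cast Nat.factorial_pos _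

lemma prod_count_pow_pos (m : Multiset X) :
    (0:ℝ) < ∏ x ∈ m.toFinset, (m.count x : ℝ) ^ (m.count x) := by
  refine Finset.prod_pos fun x hx => ?_
  have : 0 < m.count x := Multiset.count_pos.mpr (Multiset.mem_toFinset.mp hx)
  positivity

/-- Inequality (A): `T(m) * ∏ n_x^{n_x} ≤ L^L`. -/
lemma ineqA {L : ℕ} {m : Multiset X} (hm : Multiset.card m = L) :
    (Finset.univ.filter fun f : Fin L → X => ofnM f = m).card *
      ∏ x ∈ m.toFinset, m.count x ^ m.count x ≤ L ^ L := by
  rw [card_fiber_eq_multinomial hm]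
  have hmem : m.count ∈ Finset.piAntidiag m.toFinset L := by
    rw [Finset.mem_piAntidiag]
    exact ⟨by rw [Multiset.toFinset_sum_count_eq, hm],
      fun i hi => Multiset.mem_toFinset.mpr (Multiset.count_pos.mp (Nat.pos_of_ne_zero hi))⟩
  calc Nat.multinomial m.toFinset m.count * ∏ x ∈ m.toFinset, m.count x ^ m.count x
      ≤ ∑ k ∈ Finset.piAntidiag m.toFinset L,
          Nat.multinomial m.toFinset k * ∏ x ∈ m.toFinset, m.count x ^ k x :=
        Finset.single_le_sum (f := fun k => Nat.multinomial m.toFinset k * ∏ x ∈ m.toFinset, m.count x ^ k x) (fun k _ => Nat.zero_le _) hmem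
    _ = (∑ x ∈ m.toFinset, m.count x) ^ L := by
        rw [Finset.sum_pow_eq_sum_piAntidiag m.toFinset m.count L]
        norm_num
    _ = L ^ L := by rw [Multiset.toFinset_sum_count_eq, hm]

/-- Inequality (B): `L^L * ∏ n_x! ≤ (e L)^D * L! * ∏ n_x^{n_x}`. -/
lemma ineqB {L : ℕ} (hL : 1 ≤ L) {m : Multiset X} (hm : Multiset.card m = L) :
    (L:ℝ) ^ L * ∏ x ∈ m.toFinset, ((m.count x)! : ℝ) ≤
      (Real.exp 1 * L) ^ m.toFinset.card * (L ! : ℝ) *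
        ∏ x ∈ m.toFinset, (m.count x : ℝ) ^ m.count x := by
  set s := m.toFinset with hs
  set D := s.card with hD
  have hcount1 : ∀ x ∈ s, 1 ≤ m.count x := fun x hx =>
    Multiset.count_pos.mpr (Multiset.mem_toFinset.mp hx)
  have hcountL : ∀ x ∈ s, m.count x ≤ L := fun x hx => by
    rw [← hm]; exact Multiset.count_le_card _ _
  have hsum : ∑ x ∈ s, (m.count x : ℝ) = (L:ℝ) := by
    rw [← Nat.cast_sum]
    exact_mod_cast congrArg (Nat.cast (R := ℝ)) (by rw [Multiset.toFinset_sum_count_eq, hm])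
  have h1 : ∏ x ∈ s, ((m.count x)! : ℝ) ≤
      (∏ x ∈ s, (m.count x : ℝ) ^ m.count x) * (L:ℝ) ^ D * Real.exp ((D:ℝ) - L) := by
    have step : ∏ x ∈ s, ((m.count x)! : ℝ) ≤
        ∏ x ∈ s, ((m.count x : ℝ) ^ m.count x * (m.count x : ℝ) * Real.exp (1 - m.count x)) := by
      refine Finset.prod_le_prod (fun x _ => by positivity) ?_
      exact fun x hx => fact_upper (m.count x) (hcount1 x hx)
    refine step.trans ?_
    rw [Finset.prod_mul_distrib, Finset.prod_mul_distrib, ← Real.exp_sum]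
    have hsum2 : ∑ x ∈ s, ((1:ℝ) - (m.count x : ℝ)) = (D:ℝ) - L := by
      rw [Finset.sum_sub_distrib, hsum, Finset.sum_const, nsmul_eq_mul, mul_one]
    rw [hsum2]
    have hprodn : ∏ x ∈ s, (m.count x : ℝ) ≤ (L:ℝ) ^ D := by
      calc ∏ x ∈ s, (m.count x : ℝ) ≤ ∏ x ∈ s, (L:ℝ) := by
            refine Finset.prod_le_prod (fun x _ => by positivity) ?_
            exact fun x hx => by exact_mod_cast hcountL x hx
        _ = (L:ℝ) ^ D := by rw [Finset.prod_const]
    have hnn : (0:ℝ) ≤ ∏ x ∈ s, (m.count x : ℝ) ^ m.count x :=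
      le_of_lt (prod_count_pow_pos m)
    calc (∏ x ∈ s, (m.count x : ℝ) ^ m.count x) * (∏ x ∈ s, (m.count x : ℝ)) *
          Real.exp ((D:ℝ) - L)
        ≤ (∏ x ∈ s, (m.count x : ℝ) ^ m.count x) * ((L:ℝ) ^ D) * Real.exp ((D:ℝ) - L) := by
          have := mul_le_mul_of_nonneg_left hprodn hnn
          exact mul_le_mul_of_nonneg_right this (le_of_lt (Real.exp_pos _))
      _ = _ := rfl
  have h2 : (L:ℝ) ^ L * ((L:ℝ) ^ D * Real.exp ((D:ℝ) - L)) ≤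
      (Real.exp 1 * L) ^ D * (L ! : ℝ) := by
    have hl := exp_lower L
    have heq : (Real.exp 1 * (L:ℝ)) ^ D * (((L:ℝ)) / Real.exp 1) ^ L =
        (L:ℝ) ^ L * ((L:ℝ) ^ D * Real.exp ((D:ℝ) - L)) := by
      rw [mul_pow, div_pow, Real.exp_sub]
      rw [show Real.exp ((D:ℝ)) = Real.exp 1 ^ D by rw [← Real.exp_nat_mul, mul_one],
        show Real.exp ((L:ℝ)) = Real.exp 1 ^ L by rw [← Real.exp_nat_mul, mul_one]]
      field_simp
    rw [← heq]
    exact mul_le_mul_of_nonneg_left hl (by positivity)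
  calc (L:ℝ) ^ L * ∏ x ∈ s, ((m.count x)! : ℝ)
      ≤ (L:ℝ) ^ L * ((∏ x ∈ s, (m.count x : ℝ) ^ m.count x) * (L:ℝ) ^ D *
          Real.exp ((D:ℝ) - L)) := mul_le_mul_of_nonneg_left h1 (by positivity)
    _ = ((L:ℝ) ^ L * ((L:ℝ) ^ D * Real.exp ((D:ℝ) - L))) *
          ∏ x ∈ s, (m.count x : ℝ) ^ m.count x := by ring
    _ ≤ ((Real.exp 1 * L) ^ D * (L ! : ℝ)) * ∏ x ∈ s, (m.count x : ℝ) ^ m.count x :=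
          mul_le_mul_of_nonneg_right h2 (le_of_lt (prod_count_pow_pos m))
    _ = _ := by ring


lemma suppBound (m : Multiset (ℕ × ℕ)) (N t : ℕ) (h1 : ∀ x ∈ m, x.2 ≤ x.1)
    (hsum : (m.map Prod.fst).sum = N + 1) :
    m.toFinset.card * t ≤ t ^ 3 + (N + 1) := by
  classical
  set s := m.toFinset with hs
  have hsplit : (s.filter fun x => x.1 < t).card + (s.filter fun x => ¬ x.1 < t).card = s.card :=
    Finset.card_filter_add_card_filter_not _
  have hc1 : (s.filter fun x => x.1 < t).card ≤ t * t := by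
    have hsub : (s.filter fun x => x.1 < t) ⊆ Finset.range t ×ˢ Finset.range t := by
      intro x hx
      rw [Finset.mem_filter] at hx
      have hx2 : x.2 ≤ x.1 := h1 x (Multiset.mem_toFinset.mp hx.1)
      rw [Finset.mem_product, Finset.mem_range, Finset.mem_range]
      exact ⟨hx.2, lt_of_le_of_lt hx2 hx.2⟩
    calc (s.filter fun x => x.1 < t).card ≤ (Finset.range t ×ˢ Finset.range t).card :=
          Finset.card_le_card hsub
      _ = t * t := by rw [Finset.card_product, Finset.card_range]
  have hc2 : (s.filter fun x => ¬ x.1 < t).card * t ≤ N + 1 := by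
    have step1 : (s.filter fun x => ¬ x.1 < t).card * t ≤
        ∑ x ∈ s.filter fun x => ¬ x.1 < t, x.1 := by
      rw [← smul_eq_mul]
      refine Finset.card_nsmul_le_sum _ _ _ fun x hx => ?_
      rw [Finset.mem_filter] at hx
      omega
    have step2 : ∑ x ∈ s.filter (fun x => ¬ x.1 < t), x.1 ≤ ∑ x ∈ s, x.1 :=
      Finset.sum_le_sum_of_subset (Finset.filter_subset _ _)
    have step3 : ∑ x ∈ s, x.1 ≤ N + 1 := by
      rw [← hsum, Finset.sum_multiset_map_count]
      refine Finset.sum_le_sum fun x hx => ?_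
      have : 1 ≤ m.count x := Multiset.count_pos.mpr (Multiset.mem_toFinset.mp hx)
      rw [smul_eq_mul]
      exact Nat.le_mul_of_pos_left _ this
    omega
  have : s.card * t = (s.filter fun x => x.1 < t).card * t +
      (s.filter fun x => ¬ x.1 < t).card * t := by rw [← Nat.add_mul, hsplit]
  rw [this]
  have : (s.filter fun x => x.1 < t).card * t ≤ t * t * t := Nat.mul_le_mul_right _ hc1
  calc (s.filter fun x => x.1 < t).card * t + (s.filter fun x => ¬ x.1 < t).card * t
      ≤ t * t * t + (N + 1) := Nat.add_le_add this hc2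
    _ = t ^ 3 + (N + 1) := by ring_nf

end EntropyAux

/-- `w(a,b) = binom(a-1,b-1)²` for `1 ≤ b ≤ a`, and `0` otherwise. -/
def wfun (a b : ℕ) : ℕ :=
  if 1 ≤ b ∧ b ≤ a then ((a - 1).choose (b - 1)) ^ 2 else 0

/-- `Z̄^{≤M}`: sum over `L ∈ {1,…,M}` and ordered tuples `((a_1,b_1),…,(a_L,b_L))` of
pairs of positive integers with `b_k ≤ a_k`, `Σ a_k = N+1`, `Σ b_k = M+1`, of
`Π_k w(a_k,b_k)` (tuples encoded as functions `Fin L → Fin (N+1) × Fin (M+1)` via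
`a_k = f k .1 + 1`, `b_k = f k .2 + 1`). -/
def ZbarLe (N M : ℕ) : ℕ :=
  ∑ L ∈ Finset.Icc 1 M,
    ∑ f : Fin L → Fin (N + 1) × Fin (M + 1),
      if (∀ k, (f k).2.val ≤ (f k).1.val) ∧
          (∑ k, ((f k).1.val + 1)) = N + 1 ∧ (∑ k, ((f k).2.val + 1)) = M + 1 then
        ∏ k, wfun ((f k).1.val + 1) ((f k).2.val + 1)
      else 0

/-- The multiset of pairs of positive integers associated to an encoded tuple. -/
def tupleMultiset {N M L : ℕ} (f : Fin L → Fin (N + 1) × Fin (M + 1)) :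
    Multiset (ℕ × ℕ) :=
  ↑(List.ofFn fun k => ((f k).1.val + 1, (f k).2.val + 1))

/-- `Z̃^{≤M}`: same sum as `Z̄^{≤M}` but over multisets (unordered tuples), with the
multinomial count `L!/Π_x n_x!` of orderings replaced by
`exp(L·H(μ)) = L^L / Π_x n_x^{n_x}`, i.e. each admissible multiset `m` of size `L`
contributes `(L^L / Π_x n_x^{n_x}) · Π_x w(x)^{n_x}`. -/
noncomputable def ZtildeLe (N M : ℕ) : ℝ :=
  ∑ L ∈ Finset.Icc 1 M,
    ∑ m ∈ Finset.image (fun f : Fin L → Fin (N + 1) × Fin (M + 1) => tupleMultiset f)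
        (Finset.univ.filter fun f : Fin L → Fin (N + 1) × Fin (M + 1) =>
          (∀ k, (f k).2.val ≤ (f k).1.val) ∧
          (∑ k, ((f k).1.val + 1)) = N + 1 ∧ (∑ k, ((f k).2.val + 1)) = M + 1),
      ((L : ℝ) ^ L / ∏ x ∈ m.toFinset, (m.count x : ℝ) ^ m.count x) *
        ∏ x ∈ m.toFinset, (wfun x.1 x.2 : ℝ) ^ m.count x


namespace EntropyGlue
open EntropyAux

abbrev XT (N M : ℕ) := Fin (N + 1) × Fin (M + 1)

def enc {N M : ℕ} (p : XT N M) : ℕ × ℕ := (p.1.val + 1, p.2.val + 1)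

lemma enc_inj {N M : ℕ} : Function.Injective (enc (N := N) (M := M)) := by
  rintro ⟨a, b⟩ ⟨c, d⟩ h
  simp only [enc, Prod.mk.injEq] at h
  have h1 : a = c := Fin.ext (by omega)
  have h2 : b = d := Fin.ext (by omega)
  rw [h1, h2]

lemma tm_eq {N M L : ℕ} (f : Fin L → XT N M) :
    tupleMultiset f = (ofnM f).map enc := by
  simp only [tupleMultiset, ofnM, Multiset.map_coe, List.map_ofFn]
  rfl

/-- The predicate on multisets corresponding to the tuple condition. -/
def Q (N M : ℕ) (m : Multiset (ℕ × ℕ)) : Prop :=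
  (∀ x ∈ m, x.2 ≤ x.1) ∧ (m.map Prod.fst).sum = N + 1 ∧ (m.map Prod.snd).sum = M + 1

lemma P_iff_Q {N M L : ℕ} (f : Fin L → XT N M) :
    ((∀ k, (f k).2.val ≤ (f k).1.val) ∧
      (∑ k, ((f k).1.val + 1)) = N + 1 ∧ (∑ k, ((f k).2.val + 1)) = M + 1)
    ↔ Q N M (tupleMultiset f) := by
  have hmem : ∀ x : ℕ × ℕ, x ∈ tupleMultiset f ↔
      ∃ k, ((f k).1.val + 1, (f k).2.val + 1) = x := by
    intro x
    simp [tupleMultiset, List.mem_ofFn]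
  have hfst : ((tupleMultiset f).map Prod.fst).sum = ∑ k, ((f k).1.val + 1) := by
    simp [tupleMultiset, Multiset.map_coe, List.map_ofFn, Function.comp, List.sum_ofFn]
  have hsnd : ((tupleMultiset f).map Prod.snd).sum = ∑ k, ((f k).2.val + 1) := by
    simp [tupleMultiset, Multiset.map_coe, List.map_ofFn, Function.comp, List.sum_ofFn]
  constructor
  · rintro ⟨hk, hsa, hsb⟩
    refine ⟨?_, by rw [hfst]; exact hsa, by rw [hsnd]; exact hsb⟩
    intro x hx
    obtain ⟨k, rfl⟩ := (hmem x).mp hx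
    exact Nat.succ_le_succ (hk k)
  · rintro ⟨hk, hsa, hsb⟩
    refine ⟨?_, by rw [← hfst]; exact hsa, by rw [← hsnd]; exact hsb⟩
    intro k
    have := hk _ ((hmem ((f k).1.val + 1, (f k).2.val + 1)).mpr ⟨k, rfl⟩)
    simpa using this

/-- The filtered set of admissible tuples. -/
def Sset (N M L : ℕ) : Finset (Fin L → XT N M) :=
  Finset.univ.filter fun f =>
    (∀ k, (f k).2.val ≤ (f k).1.val) ∧
      (∑ k, ((f k).1.val + 1)) = N + 1 ∧ (∑ k, ((f k).2.val + 1)) = M + 1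

def imgs (N M L : ℕ) : Finset (Multiset (ℕ × ℕ)) := (Sset N M L).image tupleMultiset

def Tc (N M L : ℕ) (m : Multiset (ℕ × ℕ)) : ℕ :=
  (Finset.univ.filter fun f : Fin L → XT N M => tupleMultiset f = m).card

def Wn (m : Multiset (ℕ × ℕ)) : ℕ := ∏ x ∈ m.toFinset, wfun x.1 x.2 ^ m.count x

lemma Q_of_mem_imgs {N M L : ℕ} {m : Multiset (ℕ × ℕ)} (hm : m ∈ imgs N M L) :
    Q N M m := by
  obtain ⟨f, hf, rfl⟩ := Finset.mem_image.mp hm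
  rw [Sset, Finset.mem_filter] at hf
  exact (P_iff_Q f).mp hf.2

lemma card_of_mem_imgs {N M L : ℕ} {m : Multiset (ℕ × ℕ)} (hm : m ∈ imgs N M L) :
    Multiset.card m = L := by
  obtain ⟨f, _, rfl⟩ := Finset.mem_image.mp hm
  rw [tm_eq, Multiset.card_map, card_ofnM]

lemma prod_w_eq {N M L : ℕ} (f : Fin L → XT N M) :
    ∏ k, wfun ((f k).1.val + 1) ((f k).2.val + 1) = Wn (tupleMultiset f) := by
  rw [Wn, ← Finset.prod_multiset_map_count]
  simp only [tupleMultiset, Multiset.map_coe, List.map_ofFn]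
  rw [Multiset.prod_coe, List.prod_ofFn]
  rfl

lemma Zbar_eq (N M : ℕ) :
    ZbarLe N M = ∑ L ∈ Finset.Icc 1 M, ∑ m ∈ imgs N M L, Tc N M L m * Wn m := by
  rw [ZbarLe]
  refine Finset.sum_congr rfl fun L _ => ?_
  have h1 : ∀ f ∈ Sset N M L,
      (∏ k, wfun ((f k).1.val + 1) ((f k).2.val + 1)) = Wn (tupleMultiset f) :=
    fun f _ => prod_w_eq f
  calc (∑ f : Fin L → XT N M,
        if (∀ k, (f k).2.val ≤ (f k).1.val) ∧
            (∑ k, ((f k).1.val + 1)) = N + 1 ∧ (∑ k, ((f k).2.val + 1)) = M + 1 then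
          ∏ k, wfun ((f k).1.val + 1) ((f k).2.val + 1)
        else 0)
      = ∑ f ∈ Sset N M L, ∏ k, wfun ((f k).1.val + 1) ((f k).2.val + 1) :=
        (Finset.sum_filter _ _).symm
    _ = ∑ f ∈ Sset N M L, Wn (tupleMultiset f) := Finset.sum_congr rfl h1
    _ = ∑ m ∈ imgs N M L,
          ((Sset N M L).filter fun f => tupleMultiset f = m).card • Wn m :=
        Finset.sum_comp (fun m => Wn m) tupleMultiset
    _ = ∑ m ∈ imgs N M L, Tc N M L m * Wn m := ?_
  refine Finset.sum_congr rfl fun m hm => ?_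
  rw [smul_eq_mul]
  congr 1
  have hQ : Q N M m := Q_of_mem_imgs hm
  have : (Sset N M L).filter (fun f => tupleMultiset f = m) =
      Finset.univ.filter fun f : Fin L → XT N M => tupleMultiset f = m := by
    ext g
    simp only [Finset.mem_filter, Finset.mem_univ, true_and, Sset]
    constructor
    · tauto
    · intro h
      have hP := (P_iff_Q g).mpr (by rw [h]; exact hQ)
      tauto
  rw [this, Tc]


lemma Ztilde_eq (N M : ℕ) :
    ZtildeLe N M = ∑ L ∈ Finset.Icc 1 M, ∑ m ∈ imgs N M L,
      ((L : ℝ) ^ L / ∏ x ∈ m.toFinset, (m.count x : ℝ) ^ m.count x) * (Wn m : ℝ) := by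
  rw [ZtildeLe]
  refine Finset.sum_congr rfl fun L _ => Finset.sum_congr rfl fun m _ => ?_
  congr 1
  rw [Wn]
  push_cast
  rfl

/-- Transfer of all multiset data through the injection `enc`. -/
lemma transfer {N M L : ℕ} {m : Multiset (ℕ × ℕ)} (hm : m ∈ imgs N M L) :
    ∃ m₀ : Multiset (XT N M), Multiset.card m₀ = L ∧
      Tc N M L m = (Finset.univ.filter fun g : Fin L → XT N M => ofnM g = m₀).card ∧
      m.toFinset.card = m₀.toFinset.card ∧
      (∏ x ∈ m.toFinset, (m.count x : ℝ) ^ m.count x)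
        = ∏ x ∈ m₀.toFinset, (m₀.count x : ℝ) ^ m₀.count x ∧
      (∏ x ∈ m.toFinset, ((m.count x)! : ℝ)) = ∏ x ∈ m₀.toFinset, ((m₀.count x)! : ℝ) := by
  obtain ⟨f₀, _, rfl⟩ := Finset.mem_image.mp hm
  refine ⟨ofnM f₀, card_ofnM f₀, ?_, ?_, ?_, ?_⟩
  · rw [Tc]
    congr 1
    ext g
    simp only [Finset.mem_filter, Finset.mem_univ, true_and]
    rw [tm_eq, tm_eq]
    exact ⟨fun h => Multiset.map_injective enc_inj h, fun h => by rw [h]⟩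
  · rw [tm_eq, Multiset.toFinset_map]
    exact Finset.card_image_of_injective _ enc_inj
  · rw [tm_eq, Multiset.toFinset_map, Finset.prod_image
      (fun x _ y _ h => enc_inj h)]
    refine Finset.prod_congr rfl fun x _ => ?_
    rw [Multiset.count_map_eq_count' enc _ enc_inj]
  · rw [tm_eq, Multiset.toFinset_map, Finset.prod_image
      (fun x _ y _ h => enc_inj h)]
    refine Finset.prod_congr rfl fun x _ => ?_
    rw [Multiset.count_map_eq_count' enc _ enc_inj]

lemma Tc_prodfact {N M L : ℕ} {m : Multiset (ℕ × ℕ)} (hm : m ∈ imgs N M L) :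
    (Tc N M L m : ℝ) * ∏ x ∈ m.toFinset, ((m.count x)! : ℝ) = (L ! : ℝ) := by
  obtain ⟨m₀, hc, hT, _, _, hf⟩ := transfer hm
  rw [hT, hf]
  exact_mod_cast congrArg (Nat.cast (R := ℝ)) (count_mul_prod_factorial L m₀ hc)

/-- Pointwise inequality (A): the ordered count is at most the entropy weight. -/
lemma pointA {N M L : ℕ} {m : Multiset (ℕ × ℕ)} (hm : m ∈ imgs N M L) :
    (Tc N M L m : ℝ) ≤ (L : ℝ) ^ L / ∏ x ∈ m.toFinset, (m.count x : ℝ) ^ m.count x := by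
  obtain ⟨m₀, hc, hT, _, hp, _⟩ := transfer hm
  rw [hT, hp]
  rw [le_div_iff₀ (prod_count_pow_pos m₀)]
  have := ineqA (m := m₀) hc
  calc ((Finset.univ.filter fun g : Fin L → XT N M => ofnM g = m₀).card : ℝ) *
        ∏ x ∈ m₀.toFinset, (m₀.count x : ℝ) ^ m₀.count x
      = (((Finset.univ.filter fun g : Fin L → XT N M => ofnM g = m₀).card *
          ∏ x ∈ m₀.toFinset, m₀.count x ^ m₀.count x : ℕ) : ℝ) := by push_cast; rfl
    _ ≤ ((L ^ L : ℕ) : ℝ) := by exact_mod_cast this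
    _ = (L : ℝ) ^ L := by push_cast; rfl

/-- Pointwise inequality (B): the entropy weight is at most `(eL)^D` times the count. -/
lemma pointB {N M L : ℕ} (hL : 1 ≤ L) {m : Multiset (ℕ × ℕ)} (hm : m ∈ imgs N M L) :
    (L : ℝ) ^ L / ∏ x ∈ m.toFinset, (m.count x : ℝ) ^ m.count x ≤
      (Real.exp 1 * L) ^ m.toFinset.card * (Tc N M L m : ℝ) := by
  obtain ⟨m₀, hc, hT, hD, hp, hf⟩ := transfer hm
  have hB := ineqB hL hc
  have hTf : ((Finset.univ.filter fun g : Fin L → XT N M => ofnM g = m₀).card : ℝ) *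
      ∏ x ∈ m₀.toFinset, ((m₀.count x)! : ℝ) = (L ! : ℝ) := by
    rw [← hT, ← hf]
    exact Tc_prodfact hm
  rw [hp, hD, hT]
  rw [div_le_iff₀ (prod_count_pow_pos m₀)]
  have hfp := prod_count_factorial_pos m₀
  refine le_of_mul_le_mul_right ?_ hfp
  calc (L : ℝ) ^ L * ∏ x ∈ m₀.toFinset, ((m₀.count x)! : ℝ)
      ≤ (Real.exp 1 * L) ^ m₀.toFinset.card * (L ! : ℝ) *
          ∏ x ∈ m₀.toFinset, (m₀.count x : ℝ) ^ m₀.count x := hB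
    _ = (Real.exp 1 * L) ^ m₀.toFinset.card *
          ((Finset.univ.filter fun g : Fin L → XT N M => ofnM g = m₀).card : ℝ) *
          (∏ x ∈ m₀.toFinset, (m₀.count x : ℝ) ^ m₀.count x) *
          ∏ x ∈ m₀.toFinset, ((m₀.count x)! : ℝ) := by rw [← hTf]; ring

/-- cube-ish root scale -/
def tN (N : ℕ) : ℕ := Nat.sqrt (Nat.sqrt N) + 1

def DX (N : ℕ) : ℕ := (tN N ^ 3 + (N + 1)) / tN N

lemma suppcard_le_DX {N M L : ℕ} {m : Multiset (ℕ × ℕ)} (hm : m ∈ imgs N M L) :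
    m.toFinset.card ≤ DX N := by
  have hQ := Q_of_mem_imgs hm
  have h := suppBound m N (tN N) hQ.1 hQ.2.1
  have ht : 0 < tN N := Nat.succ_pos _
  rw [DX]
  exact (Nat.le_div_iff_mul_le ht).mpr h

lemma Zbar_le_Ztilde (N M : ℕ) : (ZbarLe N M : ℝ) ≤ ZtildeLe N M := by
  rw [Zbar_eq, Ztilde_eq]
  push_cast
  refine Finset.sum_le_sum fun L _ => Finset.sum_le_sum fun m hm => ?_
  exact mul_le_mul_of_nonneg_right (pointA hm) (by positivity)

lemma Ztilde_le_Zbar (N M : ℕ) :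
    ZtildeLe N M ≤ (Real.exp 1 * (M + 1)) ^ DX N * (ZbarLe N M : ℝ) := by
  rw [Zbar_eq, Ztilde_eq]
  push_cast
  rw [Finset.mul_sum]
  refine Finset.sum_le_sum fun L hL => ?_
  rw [Finset.mul_sum]
  refine Finset.sum_le_sum fun m hm => ?_
  have hL1 : 1 ≤ L := (Finset.mem_Icc.mp hL).1
  have hLM : L ≤ M := (Finset.mem_Icc.mp hL).2
  have hpB := pointB hL1 hm
  have hfac : (Real.exp 1 * L) ^ m.toFinset.card ≤ (Real.exp 1 * (M + 1)) ^ DX N := by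
    have h1 : (1 : ℝ) ≤ Real.exp 1 * L := by
      have : (1:ℝ) ≤ (L:ℝ) := by exact_mod_cast hL1
      nlinarith [Real.one_le_exp (by norm_num : (0:ℝ) ≤ 1)]
    calc (Real.exp 1 * L) ^ m.toFinset.card ≤ (Real.exp 1 * L) ^ DX N :=
          pow_le_pow_right₀ h1 (suppcard_le_DX hm)
      _ ≤ (Real.exp 1 * (M + 1)) ^ DX N := by
          refine pow_le_pow_left₀ (by positivity) ?_ _
          have : (L:ℝ) ≤ (M:ℝ) + 1 := by
            have : (L:ℝ) ≤ (M:ℝ) := by exact_mod_cast hLM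
            linarith
          nlinarith [Real.exp_pos 1]
  calc ((L : ℝ) ^ L / ∏ x ∈ m.toFinset, (m.count x : ℝ) ^ m.count x) * (Wn m : ℝ)
      ≤ ((Real.exp 1 * L) ^ m.toFinset.card * (Tc N M L m : ℝ)) * (Wn m : ℝ) :=
        mul_le_mul_of_nonneg_right hpB (by positivity)
    _ ≤ ((Real.exp 1 * (M + 1)) ^ DX N * (Tc N M L m : ℝ)) * (Wn m : ℝ) := by
        refine mul_le_mul_of_nonneg_right
          (mul_le_mul_of_nonneg_right hfac (by positivity)) (by positivity)
    _ = (Real.exp 1 * (M + 1)) ^ DX N * ((Tc N M L m : ℝ) * (Wn m : ℝ)) := by ring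

lemma one_le_Zbar {N M : ℕ} (hM : 1 ≤ M) (hMN : M ≤ N) : 1 ≤ ZbarLe N M := by
  rw [ZbarLe]
  have h1M : 1 ∈ Finset.Icc 1 M := Finset.mem_Icc.mpr ⟨le_refl 1, hM⟩
  set f₀ : Fin 1 → XT N M := fun _ => (⟨N, Nat.lt_succ_self N⟩, ⟨M, Nat.lt_succ_self M⟩)
    with hf₀
  have hcond : (∀ k, (f₀ k).2.val ≤ (f₀ k).1.val) ∧
      (∑ k, ((f₀ k).1.val + 1)) = N + 1 ∧ (∑ k, ((f₀ k).2.val + 1)) = M + 1 := by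
    refine ⟨fun k => hMN, ?_, ?_⟩ <;> simp [hf₀]
  have hterm : 1 ≤ ∏ k, wfun ((f₀ k).1.val + 1) ((f₀ k).2.val + 1) := by
    rw [Fin.prod_univ_one]
    simp only [hf₀, wfun]
    rw [if_pos ⟨Nat.succ_le_succ (Nat.zero_le _), Nat.succ_le_succ hMN⟩]
    simp only [Nat.add_sub_cancel]
    exact Nat.one_le_pow _ _ (Nat.choose_pos hMN)
  have hinner : 1 ≤ ∑ f : Fin 1 → XT N M,
      if (∀ k, (f k).2.val ≤ (f k).1.val) ∧
          (∑ k, ((f k).1.val + 1)) = N + 1 ∧ (∑ k, ((f k).2.val + 1)) = M + 1 then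
        ∏ k, wfun ((f k).1.val + 1) ((f k).2.val + 1)
      else 0 := by
    have := Finset.single_le_sum (f := fun f : Fin 1 → XT N M =>
        if (∀ k, (f k).2.val ≤ (f k).1.val) ∧
            (∑ k, ((f k).1.val + 1)) = N + 1 ∧ (∑ k, ((f k).2.val + 1)) = M + 1 then
          ∏ k, wfun ((f k).1.val + 1) ((f k).2.val + 1)
        else 0) (fun f _ => Nat.zero_le _) (Finset.mem_univ f₀)
    rw [if_pos hcond] at this
    exact le_trans hterm this
  calc 1 ≤ ∑ f : Fin 1 → XT N M,
        if (∀ k, (f k).2.val ≤ (f k).1.val) ∧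
            (∑ k, ((f k).1.val + 1)) = N + 1 ∧ (∑ k, ((f k).2.val + 1)) = M + 1 then
          ∏ k, wfun ((f k).1.val + 1) ((f k).2.val + 1)
        else 0 := hinner
    _ ≤ _ := Finset.single_le_sum (f := fun L => ∑ f : Fin L → XT N M,
        if (∀ k, (f k).2.val ≤ (f k).1.val) ∧
            (∑ k, ((f k).1.val + 1)) = N + 1 ∧ (∑ k, ((f k).2.val + 1)) = M + 1 then
          ∏ k, wfun ((f k).1.val + 1) ((f k).2.val + 1)
        else 0) (fun L _ => Nat.zero_le _) h1M


lemma one_le_rpow_quarter {N : ℕ} (hN : 1 ≤ N) : (1:ℝ) ≤ (N:ℝ) ^ ((1:ℝ)/4) := by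
  have hN1R : (1:ℝ) ≤ N := by exact_mod_cast hN
  calc (1:ℝ) = (1:ℝ) ^ ((1:ℝ)/4) := (Real.one_rpow _).symm
    _ ≤ (N:ℝ) ^ ((1:ℝ)/4) := Real.rpow_le_rpow zero_le_one hN1R (by norm_num)

lemma DX_le {N : ℕ} (hN : 1 ≤ N) : (DX N : ℝ) ≤ 6 * (N:ℝ) ^ ((3:ℝ)/4) := by
  set s := Nat.sqrt (Nat.sqrt N) with hs
  have hNpos : (0:ℝ) < N := by exact_mod_cast hN
  have hN1R : (1:ℝ) ≤ N := by exact_mod_cast hN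
  have htR : ((tN N : ℕ) : ℝ) = (s:ℝ) + 1 := by rw [tN]; push_cast; ring
  have htpos : (0:ℝ) < ((tN N : ℕ):ℝ) := by rw [htR]; positivity
  have hs4 : ((s:ℝ)) ^ (4:ℕ) ≤ (N:ℝ) := by
    have h1 : s ^ 2 ≤ Nat.sqrt N := Nat.sqrt_le' (Nat.sqrt N)
    have h2 : Nat.sqrt N ^ 2 ≤ N := Nat.sqrt_le' N
    have h3 : s ^ 4 ≤ N := by
      calc s ^ 4 = (s ^ 2) ^ 2 := by ring
        _ ≤ Nat.sqrt N ^ 2 := Nat.pow_le_pow_left h1 2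
        _ ≤ N := h2
    exact_mod_cast h3
  have hNt4 : (N:ℝ) ≤ ((tN N : ℕ):ℝ) ^ (4:ℕ) := by
    have h1 : Nat.sqrt N < (s + 1) ^ 2 := Nat.lt_succ_sqrt' (Nat.sqrt N)
    have h2 : N < (Nat.sqrt N + 1) ^ 2 := Nat.lt_succ_sqrt' N
    have h3 : (Nat.sqrt N + 1) ^ 2 ≤ ((s+1) ^ 2) ^ 2 := Nat.pow_le_pow_left (by omega) 2
    have h4 : N ≤ (s+1) ^ 4 := by
      have h5 : N < ((s+1) ^ 2) ^ 2 := lt_of_lt_of_le h2 h3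
      have h6 : ((s+1) ^ 2) ^ 2 = (s+1) ^ 4 := by ring
      omega
    have : (N:ℝ) ≤ ((s:ℝ) + 1) ^ (4:ℕ) := by exact_mod_cast h4
    rw [htR]
    exact this
  have hfourth : ∀ x : ℝ, 0 ≤ x → (x ^ (4:ℕ)) ^ ((1:ℝ)/4) = x := by
    intro x hx
    rw [← Real.rpow_natCast x 4, ← Real.rpow_mul hx]
    norm_num
  have h_t_ge : (N:ℝ) ^ ((1:ℝ)/4) ≤ ((tN N : ℕ):ℝ) := by
    calc (N:ℝ) ^ ((1:ℝ)/4) ≤ (((tN N : ℕ):ℝ) ^ (4:ℕ)) ^ ((1:ℝ)/4) :=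
          Real.rpow_le_rpow (le_of_lt hNpos) hNt4 (by norm_num)
      _ = ((tN N : ℕ):ℝ) := hfourth _ (le_of_lt htpos)
  have h_t_le : ((tN N : ℕ):ℝ) ≤ (N:ℝ) ^ ((1:ℝ)/4) + 1 := by
    rw [htR]
    have : (s:ℝ) ≤ (N:ℝ) ^ ((1:ℝ)/4) := by
      calc (s:ℝ) = ((s:ℝ) ^ (4:ℕ)) ^ ((1:ℝ)/4) := (hfourth _ (Nat.cast_nonneg s)).symm
        _ ≤ (N:ℝ) ^ ((1:ℝ)/4) := Real.rpow_le_rpow (by positivity) hs4 (by norm_num)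
    linarith
  have hq1 : (1:ℝ) ≤ (N:ℝ) ^ ((1:ℝ)/4) := one_le_rpow_quarter hN
  have hqpos : (0:ℝ) < (N:ℝ) ^ ((1:ℝ)/4) := lt_of_lt_of_le one_pos hq1
  have hhalf : ((N:ℝ) ^ ((1:ℝ)/4)) ^ (2:ℕ) = (N:ℝ) ^ ((1:ℝ)/2) := by
    rw [← Real.rpow_natCast ((N:ℝ) ^ ((1:ℝ)/4)) 2, ← Real.rpow_mul (le_of_lt hNpos)]
    norm_num
  have hN34 : (N:ℝ) / (N:ℝ) ^ ((1:ℝ)/4) = (N:ℝ) ^ ((3:ℝ)/4) := by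
    rw [show (3:ℝ)/4 = 1 - 1/4 by norm_num, Real.rpow_sub hNpos, Real.rpow_one]
  have hcast : (DX N : ℝ) ≤ (((tN N : ℕ):ℝ) ^ 3 + ((N:ℝ) + 1)) / ((tN N : ℕ):ℝ) := by
    have := Nat.cast_div_le (α := ℝ) (m := tN N ^ 3 + (N + 1)) (n := tN N)
    rw [DX]
    refine le_trans this ?_
    push_cast
    exact le_rfl
  have hsplit : (((tN N : ℕ):ℝ) ^ 3 + ((N:ℝ) + 1)) / ((tN N : ℕ):ℝ)
      = ((tN N : ℕ):ℝ) ^ 2 + ((N:ℝ) + 1) / ((tN N : ℕ):ℝ) := by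
    field_simp
  have hb1 : ((tN N : ℕ):ℝ) ^ 2 ≤ 4 * (N:ℝ) ^ ((3:ℝ)/4) := by
    have e1 : ((tN N : ℕ):ℝ) ^ 2 ≤ (2 * (N:ℝ) ^ ((1:ℝ)/4)) ^ 2 := by
      refine pow_le_pow_left₀ (le_of_lt htpos) ?_ 2
      linarith
    have e2 : (2 * (N:ℝ) ^ ((1:ℝ)/4)) ^ 2 = 4 * (N:ℝ) ^ ((1:ℝ)/2) := by
      rw [mul_pow, hhalf]; norm_num
    have e3 : (N:ℝ) ^ ((1:ℝ)/2) ≤ (N:ℝ) ^ ((3:ℝ)/4) :=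
      Real.rpow_le_rpow_of_exponent_le hN1R (by norm_num)
    calc ((tN N : ℕ):ℝ) ^ 2 ≤ 4 * (N:ℝ) ^ ((1:ℝ)/2) := by rw [← e2]; exact e1
      _ ≤ 4 * (N:ℝ) ^ ((3:ℝ)/4) := by linarith
  have hb2 : ((N:ℝ) + 1) / ((tN N : ℕ):ℝ) ≤ 2 * (N:ℝ) ^ ((3:ℝ)/4) := by
    have e1 : ((N:ℝ) + 1) / ((tN N : ℕ):ℝ) ≤ ((N:ℝ) + 1) / ((N:ℝ) ^ ((1:ℝ)/4)) :=
      div_le_div_of_nonneg_left (by positivity) hqpos h_t_ge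
    have e2 : ((N:ℝ) + 1) / ((N:ℝ) ^ ((1:ℝ)/4)) ≤ (2 * (N:ℝ)) / ((N:ℝ) ^ ((1:ℝ)/4)) := by
      gcongr
      linarith
    have e3 : (2 * (N:ℝ)) / ((N:ℝ) ^ ((1:ℝ)/4)) = 2 * (N:ℝ) ^ ((3:ℝ)/4) := by
      rw [mul_div_assoc, hN34]
    calc ((N:ℝ) + 1) / ((tN N : ℕ):ℝ) ≤ ((N:ℝ) + 1) / ((N:ℝ) ^ ((1:ℝ)/4)) := e1
      _ ≤ (2 * (N:ℝ)) / ((N:ℝ) ^ ((1:ℝ)/4)) := e2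
      _ = 2 * (N:ℝ) ^ ((3:ℝ)/4) := e3
  calc (DX N : ℝ) ≤ (((tN N : ℕ):ℝ) ^ 3 + ((N:ℝ) + 1)) / ((tN N : ℕ):ℝ) := hcast
    _ = ((tN N : ℕ):ℝ) ^ 2 + ((N:ℝ) + 1) / ((tN N : ℕ):ℝ) := hsplit
    _ ≤ 4 * (N:ℝ) ^ ((3:ℝ)/4) + 2 * (N:ℝ) ^ ((3:ℝ)/4) := add_le_add hb1 hb2
    _ = 6 * (N:ℝ) ^ ((3:ℝ)/4) := by ring


lemma term_bound {α : ℝ} (hα0 : 0 < α) (hα1 : α < 1) {N : ℕ} (hN : 1 ≤ N)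
    (hαN : 1 ≤ α * N) :
    (1 / N : ℝ) * |Real.log (ZbarLe N ⌊α * N⌋₊ : ℝ) - Real.log (ZtildeLe N ⌊α * N⌋₊)| ≤
      6 * (1 + Real.log 2 + Real.log N) * (N:ℝ) ^ (-(1/4:ℝ)) := by
  set M := ⌊α * N⌋₊ with hM
  have hNpos : (0:ℝ) < N := by exact_mod_cast hN
  have hM1 : 1 ≤ M := Nat.le_floor (by exact_mod_cast hαN)
  have hMN : M ≤ N := by
    refine Nat.floor_le_of_le ?_
    nlinarith
  have hZb1 : 1 ≤ ZbarLe N M := one_le_Zbar hM1 hMN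
  have hZbR : (1:ℝ) ≤ (ZbarLe N M : ℝ) := by exact_mod_cast hZb1
  have hZbpos : (0:ℝ) < (ZbarLe N M : ℝ) := lt_of_lt_of_le one_pos hZbR
  have hZt1 : (ZbarLe N M : ℝ) ≤ ZtildeLe N M := Zbar_le_Ztilde N M
  have hZtpos : (0:ℝ) < ZtildeLe N M := lt_of_lt_of_le hZbpos hZt1
  have hCpos : (0:ℝ) < (Real.exp 1 * ((M:ℝ) + 1)) ^ DX N := by positivity
  have hmono : Real.log (ZbarLe N M : ℝ) ≤ Real.log (ZtildeLe N M) :=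
    Real.log_le_log hZbpos hZt1
  have hup : Real.log (ZtildeLe N M) ≤
      Real.log ((Real.exp 1 * ((M:ℝ) + 1)) ^ DX N) + Real.log (ZbarLe N M : ℝ) := by
    calc Real.log (ZtildeLe N M)
        ≤ Real.log ((Real.exp 1 * ((M:ℝ) + 1)) ^ DX N * (ZbarLe N M : ℝ)) := by
          refine Real.log_le_log hZtpos ?_
          have := Ztilde_le_Zbar N M
          push_cast at this ⊢
          exact this
      _ = _ := Real.log_mul (ne_of_gt hCpos) (ne_of_gt hZbpos)
  have hlogC : Real.log ((Real.exp 1 * ((M:ℝ) + 1)) ^ DX N) =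
      (DX N : ℝ) * (1 + Real.log ((M:ℝ) + 1)) := by
    rw [Real.log_pow, Real.log_mul (Real.exp_ne_zero 1) (by positivity), Real.log_exp]
  have hlogM : Real.log ((M:ℝ) + 1) ≤ Real.log 2 + Real.log N := by
    have h1 : ((M:ℝ) + 1) ≤ 2 * N := by
      have : (M:ℝ) ≤ N := by exact_mod_cast hMN
      have : (1:ℝ) ≤ N := by exact_mod_cast hN
      linarith [show (M:ℝ) ≤ N from by exact_mod_cast hMN]
    calc Real.log ((M:ℝ) + 1) ≤ Real.log (2 * N) := Real.log_le_log (by positivity) h1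
      _ = Real.log 2 + Real.log N := Real.log_mul two_ne_zero (ne_of_gt hNpos)
  have habs : |Real.log (ZbarLe N M : ℝ) - Real.log (ZtildeLe N M)| ≤
      (DX N : ℝ) * (1 + Real.log 2 + Real.log N) := by
    rw [abs_sub_comm, abs_of_nonneg (sub_nonneg.mpr hmono)]
    have h2 : Real.log (ZtildeLe N M) - Real.log (ZbarLe N M : ℝ) ≤
        (DX N : ℝ) * (1 + Real.log ((M:ℝ) + 1)) := by
      rw [← hlogC]; linarith
    have h3 : (DX N : ℝ) * (1 + Real.log ((M:ℝ) + 1)) ≤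
        (DX N : ℝ) * (1 + Real.log 2 + Real.log N) := by
      refine mul_le_mul_of_nonneg_left ?_ (Nat.cast_nonneg _)
      linarith
    linarith
  have hN1R : (1:ℝ) ≤ N := by exact_mod_cast hN
  have hfac : (0:ℝ) ≤ 1 + Real.log 2 + Real.log N := by
    have h1 := Real.log_nonneg hN1R
    have h2 := Real.log_nonneg (by norm_num : (1:ℝ) ≤ 2)
    linarith
  have hDX := DX_le hN
  have hrw : 6 * (1 + Real.log 2 + Real.log N) * (N:ℝ) ^ (-(1/4:ℝ)) =
      (1 / N : ℝ) * (6 * (N:ℝ) ^ ((3:ℝ)/4) * (1 + Real.log 2 + Real.log N)) := by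
    rw [show (-(1/4:ℝ)) = 3/4 - 1 by norm_num, Real.rpow_sub hNpos, Real.rpow_one]
    field_simp
  rw [hrw]
  refine mul_le_mul_of_nonneg_left ?_ (by positivity)
  calc |Real.log (ZbarLe N M : ℝ) - Real.log (ZtildeLe N M)|
      ≤ (DX N : ℝ) * (1 + Real.log 2 + Real.log N) := habs
    _ ≤ 6 * (N:ℝ) ^ ((3:ℝ)/4) * (1 + Real.log 2 + Real.log N) :=
        mul_le_mul_of_nonneg_right hDX hfac

end EntropyGlue

/-- Entropy replacement at scale `N`: for `α ∈ (0,1)` and `M = ⌊αN⌋`,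
`(1/N)·|log Z̄^{≤M} - log Z̃^{≤M}| → 0` as `N → ∞`. -/
theorem entropy_replacement (α : ℝ) (hα : α ∈ Set.Ioo (0:ℝ) 1) :
    Tendsto (fun N : ℕ =>
        (1 / N : ℝ) *
          |Real.log (ZbarLe N ⌊α * N⌋₊ : ℝ) - Real.log (ZtildeLe N ⌊α * N⌋₊)|)
      atTop (nhds 0) := by
  obtain ⟨hα0, hα1⟩ := hα
  have hG : Tendsto (fun N : ℕ => 6 * (1 + Real.log 2 + Real.log N) * (N:ℝ) ^ (-(1/4:ℝ)))
      atTop (nhds 0) := by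
    have h1 : Tendsto (fun N : ℕ => ((N:ℝ)) ^ (-(1/4:ℝ))) atTop (nhds 0) :=
      (tendsto_rpow_neg_atTop (by norm_num)).comp tendsto_natCast_atTop_atTop
    have h2 : Tendsto (fun N : ℕ => Real.log N / ((N:ℝ)) ^ ((1/4:ℝ))) atTop (nhds 0) :=
      ((isLittleO_log_rpow_atTop (by norm_num)).tendsto_div_nhds_zero).comp
        tendsto_natCast_atTop_atTop
    have h3 := (h1.const_mul (6 * (1 + Real.log 2))).add (h2.const_mul (6:ℝ))
    rw [mul_zero, mul_zero, add_zero] at h3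
    refine Tendsto.congr' ?_ h3
    filter_upwards [eventually_gt_atTop 0] with N hN
    have hNpos : (0:ℝ) < N := by exact_mod_cast hN
    rw [Real.rpow_neg (le_of_lt hNpos), div_eq_mul_inv]
    ring
  refine tendsto_of_tendsto_of_tendsto_of_le_of_le' tendsto_const_nhds hG ?_ ?_
  · exact Filter.Eventually.of_forall fun N => by positivity
  · have hev2 : ∀ᶠ N : ℕ in atTop, 1 ≤ α * N :=
      (Tendsto.const_mul_atTop hα0 tendsto_natCast_atTop_atTop).eventually_ge_atTop 1
    filter_upwards [eventually_ge_atTop 1, hev2] with N h1 h2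
    exact EntropyGlue.term_bound hα0 hα1 h1 h2
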